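/- Let X be a (75,32,10,16) strongly regular graph with a 4-clique K whose outside-degree distribution is (b_0,b_1,b_2,b_3)=(0,29,39,3) with b_4=0, and let x0,x1,x2 be the three (pairwise non-adjacent) vertices with 3 neighbors in K, each having exactly 21 neighbors among the 29 vertices with 1 neighbor in K. Then any two of x0,x1,x2 have at most one common neighbor among the vertices with exactly 2 neighbors in K. -/
import Mathlib


open Finset

/-- The number of neighbors of `x` inside the vertex set `K`. -/
def nbrs {V : Type*} [DecidableEq V] (G : SimpleGraph V) [DecidableRel G.Adj]
    (K : Finset V) (x : V) : ℕ :=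
  (K.filter (fun y => G.Adj x y)).card

/-- The number of vertices outside `K` with exactly `i` neighbors in `K`. -/
def bcount {V : Type*} [Fintype V] [DecidableEq V] (G : SimpleGraph V) [DecidableRel G.Adj]
    (K : Finset V) (i : ℕ) : ℕ :=
  ((univ \ K).filter (fun x => nbrs G K x = i)).card

lemma aux10 {V : Type*} [Fintype V] [DecidableEq V]
    (G : SimpleGraph V) [DecidableRel G.Adj]
    (hG : G.IsSRGWith 75 32 10 16)
    (K : Finset V) (hKcard : K.card = 4)
    (hb1 : bcount G K 1 = 29)
    (a b : V) (hab : a ≠ b) (hnadj : ¬ G.Adj a b)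
    (hna : nbrs G K a = 3)
    (hnb : nbrs G K b = 3)
    (h21a : ((Finset.univ \ K).filter (fun y => nbrs G K y = 1 ∧ G.Adj a y)).card = 21)
    (h21b : ((Finset.univ \ K).filter (fun y => nbrs G K y = 1 ∧ G.Adj b y)).card = 21) :
    ((Finset.univ \ K).filter (fun y => nbrs G K y = 2 ∧ G.Adj a y ∧ G.Adj b y)).card ≤ 1 := by
  classical
  unfold bcount at hb1
  unfold nbrs at *
  set S := univ.filter (fun y => G.Adj a y ∧ G.Adj b y) with hSdef
  have hS : S.card = 16 := by
    have h := hG.of_not_adj hab hnadj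
    rw [← Set.toFinset_card] at h
    rw [← h]
    congr 1
    ext y
    simp [hSdef, SimpleGraph.mem_commonNeighbors]
  set SK := K.filter (fun y => G.Adj a y ∧ G.Adj b y) with hSKdef
  have hSKge : 2 ≤ SK.card := by
    have hun : (K.filter (fun y => G.Adj a y) ∪ K.filter (fun y => G.Adj b y)).card ≤ 4 := by
      refine le_trans (card_le_card (union_subset (filter_subset _ _) (filter_subset _ _))) hKcard.le
    have hint : K.filter (fun y => G.Adj a y) ∩ K.filter (fun y => G.Adj b y) = SK := by
      ext y; simp [hSKdef]; tauto
    have hie := Finset.card_union_add_card_inter (K.filter (fun y => G.Adj a y))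
      (K.filter (fun y => G.Adj b y))
    rw [hint, hna, hnb] at hie
    omega
  set S1 := (univ \ K).filter (fun y => (K.filter (fun z => G.Adj y z)).card = 1 ∧ G.Adj a y ∧ G.Adj b y) with hS1def
  have hS1ge : 13 ≤ S1.card := by
    set A := (univ \ K).filter (fun y => (K.filter (fun z => G.Adj y z)).card = 1 ∧ G.Adj a y)
    set B := (univ \ K).filter (fun y => (K.filter (fun z => G.Adj y z)).card = 1 ∧ G.Adj b y)
    have hun : (A ∪ B).card ≤ 29 := by
      rw [← hb1]
      refine card_le_card ?_
      intro y hy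
      simp only [A, B, mem_union, mem_filter] at hy ⊢
      tauto
    have hint : A ∩ B = S1 := by
      ext y; simp [A, B, hS1def]; tauto
    have hie := Finset.card_union_add_card_inter A B
    rw [hint, h21a, h21b] at hie
    omega
  set S2 := (univ \ K).filter (fun y => (K.filter (fun z => G.Adj y z)).card = 2 ∧ G.Adj a y ∧ G.Adj b y) with hS2def
  have hd12 : Disjoint S1 S2 := by
    rw [Finset.disjoint_left]
    intro y hy1 hy2
    simp only [hS1def, hS2def, mem_filter] at hy1 hy2
    omega
  have hdK : Disjoint SK (S1 ∪ S2) := by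
    rw [Finset.disjoint_left]
    intro y hy1 hy2
    simp only [hSKdef, hS1def, hS2def, mem_union, mem_filter, mem_sdiff] at hy1 hy2
    tauto
  have hsub : SK ∪ (S1 ∪ S2) ⊆ S := by
    intro y hy
    simp only [hSKdef, hS1def, hS2def, hSdef, mem_union, mem_filter, mem_sdiff, mem_univ, true_and] at hy ⊢
    tauto
  have hcards : SK.card + (S1.card + S2.card) ≤ 16 := by
    rw [← Finset.card_union_of_disjoint hd12, ← Finset.card_union_of_disjoint hdK, ← hS]
    exact card_le_card hsub
  omega

/-- Case (0,29,39,3): any two of the three pairwise non-adjacent vertices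
`x0,x1,x2` with 3 neighbors in the 4-clique `K` (each having 21 neighbors among
the 1-neighbor vertices) have at most one common neighbor among the vertices
with exactly 2 neighbors in `K`. -/
theorem stmt10 {V : Type*} [Fintype V] [DecidableEq V]
    (G : SimpleGraph V) [DecidableRel G.Adj]
    (hG : G.IsSRGWith 75 32 10 16)
    (K : Finset V) (hK : G.IsNClique 4 K)
    (hb0 : bcount G K 0 = 0) (hb1 : bcount G K 1 = 29)
    (hb2 : bcount G K 2 = 39) (hb3 : bcount G K 3 = 3) (hb4 : bcount G K 4 = 0)
    (x0 x1 x2 : V) (h01 : x0 ≠ x1) (h02 : x0 ≠ x2) (h12 : x1 ≠ x2)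
    (hK0 : x0 ∉ K) (hK1 : x1 ∉ K) (hK2 : x2 ∉ K)
    (hn0 : nbrs G K x0 = 3) (hn1 : nbrs G K x1 = 3) (hn2 : nbrs G K x2 = 3)
    (hind : ∀ a ∈ ({x0, x1, x2} : Finset V), ∀ b ∈ ({x0, x1, x2} : Finset V), ¬ G.Adj a b)
    (h21 : ∀ z ∈ ({x0, x1, x2} : Finset V),
      ((univ \ K).filter (fun y => nbrs G K y = 1 ∧ G.Adj z y)).card = 21) :
    ∀ a ∈ ({x0, x1, x2} : Finset V), ∀ b ∈ ({x0, x1, x2} : Finset V), a ≠ b →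
      ((univ \ K).filter (fun y => nbrs G K y = 2 ∧ G.Adj a y ∧ G.Adj b y)).card ≤ 1 := by
  intro a ha b hb hne
  have hn : ∀ z ∈ ({x0, x1, x2} : Finset V), nbrs G K z = 3 := by
    intro z hz
    simp only [mem_insert, mem_singleton] at hz
    rcases hz with h | h | h <;> subst h <;> assumption
  exact aux10 G hG K hK.card_eq hb1 a b hne (hind a ha b hb) (hn a ha) (hn b hb)
    (h21 a ha) (h21 b hb)
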